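/- Let AF be a finite argumentation framework and E ⊆ AR. The following are equivalent: (a) E is a complete extension with ⊆-maximal range E ∪ E⁺ among complete extensions (i.e., E is semi-stable); (b) E is a preferred extension and E ∪ E⁺ is ⊆-maximal among ranges of preferred extensions. -/

import Mathlib

/- Argumentation framework notions over argument type `A` with attack relation `att`. -/
section AF
variable {A : Type*}

/-- `S⁺`: the set of arguments attacked by `S`. -/
def plusSet (att : A → A → Prop) (S : Set A) : Set A := {b | ∃ a ∈ S, att a b}

/-- The range of `S`: `S ∪ S⁺`. -/
def rangeOf (att : A → A → Prop) (S : Set A) : Set A := S ∪ plusSet att S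

def conflictFree (att : A → A → Prop) (S : Set A) : Prop :=
  ∀ a ∈ S, ∀ b ∈ S, ¬ att a b

def acceptable (att : A → A → Prop) (S : Set A) (a : A) : Prop :=
  ∀ b, att b a → ∃ c ∈ S, att c b

def admissible (att : A → A → Prop) (S : Set A) : Prop :=
  conflictFree att S ∧ ∀ a ∈ S, acceptable att S a

def completeExt (att : A → A → Prop) (S : Set A) : Prop :=
  admissible att S ∧ ∀ a, acceptable att S a → a ∈ S

def preferredExt (att : A → A → Prop) (S : Set A) : Prop :=
  admissible att S ∧ ∀ T, admissible att T → S ⊆ T → T = S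

def stableExt (att : A → A → Prop) (S : Set A) : Prop :=
  conflictFree att S ∧ ∀ b, b ∉ S → ∃ a ∈ S, att a b

def semiStableExt (att : A → A → Prop) (S : Set A) : Prop :=
  completeExt att S ∧ ∀ T, completeExt att T →
    rangeOf att S ⊆ rangeOf att T → rangeOf att T ⊆ rangeOf att S

def stageExt (att : A → A → Prop) (S : Set A) : Prop :=
  conflictFree att S ∧ ∀ T, conflictFree att T →
    rangeOf att S ⊆ rangeOf att T → rangeOf att T ⊆ rangeOf att S

end AF

/- Normal logic programs. -/
section LP
variable {α : Type*}

structure Clause (α : Type*) where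
  head : α
  pos : Set α
  neg : Set α

/-- `M` satisfies clause `C` read classically (`not` = classical negation). -/
def satClause (M : Set α) (C : Clause α) : Prop :=
  (C.pos ⊆ M ∧ C.neg ∩ M = ∅) → C.head ∈ M

/-- `M` is a 2-valued classical model of the program `P`. -/
def isModel (M : Set α) (P : Set (Clause α)) : Prop := ∀ C ∈ P, satClause M C

/-- Gelfond–Lifschitz reduct `P^M`. -/
def glReduct (P : Set (Clause α)) (M : Set α) : Set (Clause α) :=
  {C' | ∃ C ∈ P, C.neg ∩ M = ∅ ∧ C' = ⟨C.head, C.pos, ∅⟩}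

/-- The facts of a program. -/
def facts (P : Set (Clause α)) : Set α :=
  {a | ∃ C ∈ P, C.head = a ∧ C.pos = ∅ ∧ C.neg = ∅}

def supportedModel (M : Set α) (P : Set (Clause α)) : Prop :=
  isModel M P ∧ ∀ a ∈ M, ∃ C ∈ P, C.head = a ∧ C.pos ⊆ M ∧ C.neg ∩ M = ∅

/-- `M` is a stable model of `P`: a ⊆-minimal model of `P^M`. -/
def stableModel (M : Set α) (P : Set (Clause α)) : Prop :=
  isModel M (glReduct P M) ∧ ∀ N ⊆ M, isModel N (glReduct P M) → N = M

/-- The reduction `RED(P,M)`. -/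
def red (P : Set (Clause α)) (M : Set α) : Set (Clause α) :=
  {C' | ∃ C ∈ P, C' = ⟨C.head, C.pos, C.neg ∩ M⟩}

/-- `M` is a p-stable model of `P`. -/
def pStableModel (M : Set α) (P : Set (Clause α)) : Prop :=
  isModel M (red P M) ∧ ∀ a ∈ M, ∀ I : Set α, isModel I (red P M) → a ∈ I

/-- Atoms occurring in `P`. -/
def atomsOf (P : Set (Clause α)) : Set α :=
  ⋃ C ∈ P, ({C.head} ∪ C.pos ∪ C.neg)

end LP

/- The mappings `Π_AF⁻` and `Π_AF`; the atom `def(x)` is identified with `x`,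
so the signature `{def(x) | x ∈ AR}` is `Set.univ`. -/
section Maps
variable {A : Type*}

def piMinus (att : A → A → Prop) : Set (Clause A) :=
  {C | ∃ a b, att b a ∧ C = ⟨a, ∅, {b}⟩}

def piAF (att : A → A → Prop) : Set (Clause A) :=
  piMinus att ∪ {C | ∃ a b, att b a ∧ C = ⟨a, {c | att c b}, ∅⟩}

/-- `Facts(P^M) ∪ (L \ M)`, with `L = {def(x) | x ∈ AR} = Set.univ`. -/
def scSet (P : Set (Clause A)) (M : Set A) : Set A := facts (glReduct P M) ∪ Mᶜ

/-- GL-supported model of `Π_AF`. -/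
def glSupportedModel (att : A → A → Prop) (M : Set A) : Prop :=
  supportedModel M (piAF att) ∧ ∀ N, supportedModel N (piAF att) →
    scSet (piAF att) M ⊆ scSet (piAF att) N → scSet (piAF att) N ⊆ scSet (piAF att) M

/-- GL-stage model of `Π_AF⁻`. -/
def glStageModel (att : A → A → Prop) (M : Set A) : Prop :=
  isModel M (piMinus att) ∧ ∀ N, isModel N (piMinus att) →
    scSet (piMinus att) M ⊆ scSet (piMinus att) N → scSet (piMinus att) N ⊆ scSet (piMinus att) M

end Maps

section Aux
variable {A : Type*}

lemma acc_mono' {att : A → A → Prop} {S T : Set A} {a : A} (hST : S ⊆ T)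
    (h : acceptable att S a) : acceptable att T a := by
  intro b hb
  obtain ⟨c, hc, hcb⟩ := h b hb
  exact ⟨c, hST hc, hcb⟩

lemma fundamental' {att : A → A → Prop} {S : Set A} {a : A}
    (hS : admissible att S) (ha : acceptable att S a) :
    admissible att (insert a S) := by
  obtain ⟨hcf, hacc⟩ := hS
  have key : ∀ b ∈ S, ¬ att b a := by
    intro b hb hba
    obtain ⟨c, hc, hcb⟩ := ha b hba
    exact hcf c hc b hb hcb
  constructor
  · intro x hx y hy hxy
    rcases hx with hx | hx
    · rcases hy with hy | hy
      · subst hx; subst hy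
        obtain ⟨c, hc, hcx⟩ := ha y hxy
        exact key c hc hcx
      · subst hx
        obtain ⟨c, hc, hca⟩ := hacc y hy x hxy
        exact key c hc hca
    · rcases hy with hy | hy
      · subst hy
        exact key x hx hxy
      · exact hcf x hx y hy hxy
  · intro x hx
    rcases hx with rfl | hx
    · exact acc_mono' (Set.subset_insert _ _) ha
    · exact acc_mono' (Set.subset_insert _ _) (hacc x hx)

lemma exists_pref' [Finite A] {att : A → A → Prop} {S : Set A}
    (hS : admissible att S) : ∃ P, preferredExt att P ∧ S ⊆ P := by
  have hfin : ({T : Set A | admissible att T ∧ S ⊆ T}).Finite := Set.toFinite _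
  obtain ⟨P, hP, hPmax'⟩ := Set.Finite.exists_maximal hfin ⟨S, hS, subset_rfl⟩
  have hPmax : ∀ T ∈ {T : Set A | admissible att T ∧ S ⊆ T}, P ⊆ T → P = T :=
    fun T hT h => h.antisymm (hPmax' hT h)
  refine ⟨P, ⟨hP.1, ?_⟩, hP.2⟩
  intro T hT hPT
  exact (hPmax T ⟨hT, hP.2.trans hPT⟩ hPT).symm

lemma pref_complete' {att : A → A → Prop} {E : Set A}
    (h : preferredExt att E) : completeExt att E := by
  refine ⟨h.1, fun a ha => ?_⟩
  have := h.2 (insert a E) (fundamental' h.1 ha) (Set.subset_insert _ _)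
  rw [← this]; exact Set.mem_insert _ _

lemma range_mono' {att : A → A → Prop} {S T : Set A} (h : S ⊆ T) :
    rangeOf att S ⊆ rangeOf att T := by
  intro x hx
  rcases hx with hx | ⟨a, ha, hax⟩
  · exact Or.inl (h hx)
  · exact Or.inr ⟨a, h ha, hax⟩

end Aux

theorem stmt6 {A : Type*} [Finite A] (att : A → A → Prop) (E : Set A) :
    semiStableExt att E ↔
    (preferredExt att E ∧ ∀ T, preferredExt att T →
        rangeOf att E ⊆ rangeOf att T → rangeOf att T ⊆ rangeOf att E) := by
  constructor
  · rintro ⟨hc, hmax⟩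
    refine ⟨⟨hc.1, fun T hT hET => ?_⟩, fun T hT h => hmax T (pref_complete' hT) h⟩
    obtain ⟨P, hP, hTP⟩ := exists_pref' hT
    have hEP : E ⊆ P := hET.trans hTP
    have hrange : rangeOf att P ⊆ rangeOf att E :=
      hmax P (pref_complete' hP) (range_mono' hEP)
    have hTE : T ⊆ E := by
      intro x hx
      rcases hrange (range_mono' hTP (Or.inl hx)) with h | ⟨a, ha, hax⟩
      · exact h
      · exact absurd hax (hP.1.1 a (hEP ha) x (hTP hx))
    exact Set.Subset.antisymm hTE hET
  · rintro ⟨hp, hmax⟩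
    refine ⟨pref_complete' hp, fun T hT hET => ?_⟩
    obtain ⟨P, hP, hTP⟩ := exists_pref' hT.1
    exact (range_mono' hTP).trans (hmax P hP (hET.trans (range_mono' hTP)))
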